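/- arXiv:2509.11515 — 2 statements merged into one kernel-verified Lean document; each statement's English description precedes it below -/
import Mathlib

section
/- Under the hypotheses of Theorem 1 (G ∈ L¹(ℝ), Assumption 1, a ≥ 0, b ≠ 0, the contraction condition 2√π·N_{a,b}·l < 1, and in the case a = 0 additionally xG ∈ L¹(ℝ) and ∫_ℝ G = 0), the unique H⁴(ℝ) solution u of −u'''' + b u' + a u + ∫_ℝ G(x−y) F(u(y),y) dy = 0 does not vanish identically on ℝ, provided that the intersection of the supports of the Fourier transforms of F(0,·) and of G is a set of nonzero Lebesgue measure on ℝ. -/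
open MeasureTheory Real Filter Topology

/-- The Fourier transform `Ĝ(p) = (1/√(2π)) ∫ G(x) e^{-ipx} dx`. -/
noncomputable def fourierTransform (G : ℝ → ℝ) (p : ℝ) : ℂ :=
  (1 / Real.sqrt (2 * Real.pi)) * ∫ x : ℝ, (G x : ℂ) * Complex.exp (-Complex.I * p * x)

/-- The symbol `p⁴ - a - i b p` of the operator `d⁴/dx⁴ - b d/dx - a`. -/
noncomputable def denom (a b p : ℝ) : ℂ := (p : ℂ) ^ 4 - (a : ℂ) - Complex.I * b * p

/-- `N_{a,b}`: the maximum of the two sup-norms. -/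
noncomputable def Nab (G : ℝ → ℝ) (a b : ℝ) : ℝ :=
  max (⨆ p : ℝ, ‖fourierTransform G p / denom a b p‖)
      (⨆ p : ℝ, ‖(p : ℂ) ^ 4 * fourierTransform G p / denom a b p‖)

/-- `u ∈ H⁴(ℝ)`: four times differentiable with `u, u'''' ∈ L²(ℝ)`. -/
def IsH4 (u : ℝ → ℝ) : Prop :=
  (∀ k : ℕ, k < 4 → Differentiable ℝ (iteratedDeriv k u)) ∧
  MemLp u 2 (volume : Measure ℝ) ∧
  MemLp (iteratedDeriv 4 u) 2 (volume : Measure ℝ)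

/-- Assumption 1 on the nonlinearity `F` (on the whole real line), with Lipschitz constant `l`. -/
structure Assumption1 (F : ℝ → ℝ → ℝ) (l : ℝ) : Prop where
  caratheodory : ∀ u : ℝ, Measurable fun x => F u x
  exists_bound : ∃ (k : ℝ) (h : ℝ → ℝ), 0 < k ∧ (∀ x, 0 ≤ h x) ∧
    MemLp h 2 (volume : Measure ℝ) ∧ ∀ u x, |F u x| ≤ k * |u| + h x
  lipschitz_pos : 0 < l
  lipschitz : ∀ u₁ u₂ x : ℝ, |F u₁ x - F u₂ x| ≤ l * |u₁ - u₂|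

/-- `u` solves `-u'''' + b u' + a u + ∫_ℝ G(x-y) F(u(y),y) dy = 0` on `ℝ`. -/
def SolvesIDE (F : ℝ → ℝ → ℝ) (G : ℝ → ℝ) (a b : ℝ) (u : ℝ → ℝ) : Prop :=
  ∀ x : ℝ,
    -(iteratedDeriv 4 u x) + b * deriv u x + a * u x + (∫ y : ℝ, G (x - y) * F (u y) y) = 0

/-- Iterated derivatives of the zero function vanish. -/
lemma iteratedDeriv_zero_fun (n : ℕ) : iteratedDeriv n (fun _ : ℝ => (0 : ℝ)) = fun _ => 0 := by
  induction n with
  | zero => simp [iteratedDeriv_zero]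
  | succ n ih =>
    rw [iteratedDeriv_succ, ih]
    ext x
    simp

/-- The complex exponential `e^{-ipx}` has norm one for real `p, x`. -/
lemma norm_exp_neg_I_mul (p x : ℝ) : ‖Complex.exp (-Complex.I * p * x)‖ = 1 := by
  rw [Complex.norm_exp]
  have : (-Complex.I * p * x).re = 0 := by simp
  rw [this, Real.exp_zero]

/-- If `f` is integrable and measurable, so is `x ↦ f x · e^{-ipx}`. -/
lemma integrable_mul_exp {f : ℝ → ℝ} (hf : Integrable f (volume : Measure ℝ)) (p : ℝ) :
    Integrable (fun x => (f x : ℂ) * Complex.exp (-Complex.I * p * x)) (volume : Measure ℝ) := by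
  have hm : AEStronglyMeasurable (fun x => (f x : ℂ) * Complex.exp (-Complex.I * p * x))
      (volume : Measure ℝ) := by
    apply AEStronglyMeasurable.mul
    · exact (Complex.continuous_ofReal.comp_aestronglyMeasurable hf.aestronglyMeasurable)
    · exact (Complex.continuous_exp.comp (by continuity)).aestronglyMeasurable
  refine ⟨hm, ?_⟩
  have : ∀ x, ‖(f x : ℂ) * Complex.exp (-Complex.I * p * x)‖ = ‖f x‖ := by
    intro x
    rw [norm_mul, norm_exp_neg_I_mul, mul_one, Complex.norm_real]
  rw [hasFiniteIntegral_iff_norm]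
  simp only [this]
  rw [← hasFiniteIntegral_iff_norm]
  exact hf.hasFiniteIntegral

/-- Real integrals coerce to complex integrals. -/
lemma integral_coe_complex (g : ℝ → ℝ) (μ : Measure ℝ) :
    ∫ x, (g x : ℂ) ∂μ = ((∫ x, g x ∂μ : ℝ) : ℂ) := integral_ofReal

/-- Theorem 1, nontriviality: under the hypotheses of Theorem 1 (in the case `a = 0`
additionally `xG ∈ L¹(ℝ)` and `∫ G = 0`), any `H⁴(ℝ)` solution of the integro-differential
equation does not vanish identically, provided that the intersection of the supports of the
Fourier transforms of `F(0,·)` and of `G` has nonzero Lebesgue measure. -/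
theorem solution_nontrivial_real_line
    (G : ℝ → ℝ) (hG : Integrable G (volume : Measure ℝ))
    (F : ℝ → ℝ → ℝ) (l : ℝ) (hF : Assumption1 F l)
    (a b : ℝ) (ha : 0 ≤ a) (hb : b ≠ 0)
    (hzero : a = 0 → Integrable (fun x => x * G x) (volume : Measure ℝ) ∧ (∫ x : ℝ, G x) = 0)
    (hcontr : 2 * Real.sqrt Real.pi * Nab G a b * l < 1)
    (hsupp : volume (Function.support (fourierTransform (fun x => F 0 x)) ∩
      Function.support (fourierTransform G)) ≠ 0)
    (u : ℝ → ℝ) (hu : IsH4 u) (hsol : SolvesIDE F G a b u) :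
    ¬ (∀ x : ℝ, u x = 0) := by
  intro h0
  have hu0 : u = fun _ => 0 := funext h0
  subst hu0
  -- The equation reduces to the vanishing of the convolution of `G` with `F 0 ·`.
  have hconv : ∀ x : ℝ, (∫ y : ℝ, G (x - y) * F 0 y) = 0 := by
    intro x
    have := hsol x
    rw [iteratedDeriv_zero_fun 4] at this
    simpa using this
  -- set `f := F 0 ·`
  set f : ℝ → ℝ := fun y => F 0 y with hfdef
  by_cases hint : Integrable f (volume : Measure ℝ)
  · -- Fubini: for every `p`, `Ĝ(p) · f̂(p) = 0`, hence the supports are disjoint.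
    have key : ∀ p : ℝ,
        (∫ y : ℝ, (f y : ℂ) * Complex.exp (-Complex.I * p * y)) *
        (∫ t : ℝ, (G t : ℂ) * Complex.exp (-Complex.I * p * t)) = 0 := by
      intro p
      set fC : ℝ → ℂ := fun y => (f y : ℂ) * Complex.exp (-Complex.I * p * y) with hfC
      set GC : ℝ → ℂ := fun t => (G t : ℂ) * Complex.exp (-Complex.I * p * t) with hGC
      have hfCint : Integrable fC (volume : Measure ℝ) := integrable_mul_exp hint p
      have hGCint : Integrable GC (volume : Measure ℝ) := integrable_mul_exp hG p
      have hprod : Integrable (fun z : ℝ × ℝ => fC z.2 * GC (z.1 - z.2))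
          ((volume : Measure ℝ).prod (volume : Measure ℝ)) := by
        have := hfCint.convolution_integrand (ContinuousLinearMap.mul ℂ ℂ) hGCint
        simpa using this
      have hswap : (∫ x : ℝ, ∫ y : ℝ, fC y * GC (x - y))
          = ∫ y : ℝ, ∫ x : ℝ, fC y * GC (x - y) := by
        apply integral_integral_swap
        exact hprod
      -- the left side is zero
      have hL : (∫ x : ℝ, ∫ y : ℝ, fC y * GC (x - y)) = 0 := by
        have hinner : ∀ x : ℝ, (∫ y : ℝ, fC y * GC (x - y)) = 0 := by
          intro x
          have hptwise : ∀ y : ℝ, fC y * GC (x - y)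
              = ((G (x - y) * f y : ℝ) : ℂ) * Complex.exp (-Complex.I * p * x) := by
            intro y
            have he : Complex.exp (-Complex.I * p * y) *
                Complex.exp (-Complex.I * p * ((x : ℂ) - y)) = Complex.exp (-Complex.I * p * x) := by
              rw [← Complex.exp_add]; congr 1; ring
            rw [hfC, hGC]
            push_cast
            rw [mul_mul_mul_comm, he]
            push_cast
            ring
          rw [show (fun y => fC y * GC (x - y))
              = fun y => ((G (x - y) * f y : ℝ) : ℂ) * Complex.exp (-Complex.I * p * x)
              from funext hptwise]
          rw [integral_mul_const, integral_coe_complex, hconv x]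
          simp
        simp only [hinner, integral_zero]
      -- the right side is the product of the Fourier integrals
      have hR : (∫ y : ℝ, ∫ x : ℝ, fC y * GC (x - y))
          = (∫ y : ℝ, fC y) * (∫ t : ℝ, GC t) := by
        have hinner : ∀ y : ℝ, (∫ x : ℝ, fC y * GC (x - y)) = fC y * ∫ t : ℝ, GC t := by
          intro y
          rw [integral_const_mul]
          congr 1
          exact integral_sub_right_eq_self GC y
        simp only [hinner]
        rw [integral_mul_const]
      rw [hL] at hswap
      rw [hR] at hswap
      exact hswap.symm
    -- the intersection of supports is empty
    apply hsupp
    have hempty : Function.support (fourierTransform (fun x => F 0 x)) ∩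
        Function.support (fourierTransform G) = ∅ := by
      ext p
      simp only [Set.mem_inter_iff, Function.mem_support, Set.mem_empty_iff_false, iff_false,
        not_and, not_not]
      intro hfp
      by_contra hGp
      apply hfp
      unfold fourierTransform at hfp hGp ⊢
      have h2 : (∫ y : ℝ, (f y : ℂ) * Complex.exp (-Complex.I * p * y)) = 0 ∨
          (∫ t : ℝ, (G t : ℂ) * Complex.exp (-Complex.I * p * t)) = 0 :=
        mul_eq_zero.mp (key p)
      rcases h2 with h2 | h2
      · rw [hfdef] at h2; rw [h2, mul_zero]
      · exact absurd (by rw [h2, mul_zero]) hGp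
    rw [hempty]
    exact measure_empty
  · -- `F 0 ·` not integrable: its Fourier transform is identically zero.
    apply hsupp
    have hzeroFT : ∀ p : ℝ, fourierTransform (fun x => F 0 x) p = 0 := by
      intro p
      unfold fourierTransform
      have : ¬ Integrable (fun x => ((F 0 x : ℝ) : ℂ) * Complex.exp (-Complex.I * p * x))
          (volume : Measure ℝ) := by
        intro hcontra
        apply hint
        have hm : AEStronglyMeasurable f (volume : Measure ℝ) :=
          (hF.caratheodory 0).aestronglyMeasurable
        refine ⟨hm, ?_⟩
        have hnorm : ∀ x, ‖((F 0 x : ℝ) : ℂ) * Complex.exp (-Complex.I * p * x)‖ = ‖f x‖ := by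
          intro x
          rw [norm_mul, norm_exp_neg_I_mul, mul_one, Complex.norm_real]
        have := hcontra.hasFiniteIntegral
        rw [hasFiniteIntegral_iff_norm] at this ⊢
        simpa only [hnorm] using this
      rw [integral_undef this, mul_zero]
    have hempty : Function.support (fourierTransform (fun x => F 0 x)) ∩
        Function.support (fourierTransform G) = ∅ := by
      ext p
      simp [Function.mem_support, hzeroFT p]
    rw [hempty]
    exact measure_empty
end

section
/- Let G : ℝ → ℝ with G ∈ L¹(ℝ) and x·G(x) ∈ L¹(ℝ), and let b ∈ ℝ, b ≠ 0. Then N_{0,b} := max{ sup_{p∈ℝ} |Ĝ(p)/(p⁴ − ibp)|, sup_{p∈ℝ} |p⁴Ĝ(p)/(p⁴ − ibp)| } is finite if and only if the orthogonality relation ∫_ℝ G(x) dx = 0 holds. -/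
open MeasureTheory Real Filter Topology

lemma exp_I_sub_one_norm_le (θ : ℝ) : ‖Complex.exp (θ * Complex.I) - 1‖ ≤ |θ| := by
  have h : Complex.exp (θ * Complex.I) - 1
      = Complex.ofReal (Real.cos θ - 1) + Complex.ofReal (Real.sin θ) * Complex.I := by
    rw [Complex.exp_mul_I, ← Complex.ofReal_cos, ← Complex.ofReal_sin]
    push_cast; ring
  rw [h, Complex.norm_add_mul_I, ← Real.sqrt_sq_eq_abs]
  apply Real.sqrt_le_sqrt
  have h1 := Real.sin_sq_add_cos_sq θ
  have h2 := Real.one_sub_sq_div_two_le_cos (x := θ)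
  nlinarith

lemma exp_arg_eq (p x : ℝ) : -Complex.I * p * x = Complex.ofReal (-(p*x)) * Complex.I := by
  push_cast; ring

lemma integrable_ker (G : ℝ → ℝ) (hG : Integrable G (volume : Measure ℝ)) (p : ℝ) :
    Integrable (fun x : ℝ => (G x : ℂ) * Complex.exp (-Complex.I * p * x)) volume := by
  refine (hG.norm.const_mul 1).mono' ?_ ?_
  · exact (Complex.continuous_ofReal.comp_aestronglyMeasurable hG.1.aemeasurable.aestronglyMeasurable).mul
      ((Complex.continuous_exp.comp (by continuity)).aestronglyMeasurable)
  · filter_upwards with x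
    rw [norm_mul, exp_arg_eq, Complex.norm_exp_ofReal_mul_I]
    simp

lemma denom_im (b p : ℝ) : (denom 0 b p).im = -(b*p) := by
  simp [denom, ← Complex.ofReal_pow]

lemma denom_re (b p : ℝ) : (denom 0 b p).re = p^4 := by
  simp [denom, ← Complex.ofReal_pow]

lemma norm_denom_ge (b p : ℝ) : |b| * |p| ≤ ‖denom 0 b p‖ := by
  have := Complex.abs_im_le_norm (denom 0 b p)
  rw [denom_im, abs_neg, abs_mul] at this
  exact this

lemma norm_denom_ge' (b p : ℝ) : |p|^4 ≤ ‖denom 0 b p‖ := by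
  have := Complex.abs_re_le_norm (denom 0 b p)
  rw [denom_re] at this
  calc |p|^4 = |p^4| := by rw [abs_pow]
  _ ≤ _ := this

lemma norm_denom_le (b p : ℝ) : ‖denom 0 b p‖ ≤ |p|^4 + |b| * |p| := by
  have : denom 0 b p = (p:ℂ)^4 - Complex.I * b * p := by simp [denom]
  rw [this]
  refine (norm_sub_le _ _).trans (le_of_eq ?_)
  simp [norm_pow, abs_mul]

lemma ft_zero (G : ℝ → ℝ) : fourierTransform G 0
    = (Real.sqrt (2 * Real.pi))⁻¹ * Complex.ofReal (∫ x : ℝ, G x) := by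
  unfold fourierTransform
  have : ∀ x : ℝ, (G x : ℂ) * Complex.exp (-Complex.I * (0:ℝ) * x) = ((G x : ℝ) : ℂ) := by
    intro x; simp
  simp only [this]
  have h2 : ∫ x : ℝ, ((G x : ℝ) : ℂ) = ((∫ x : ℝ, G x : ℝ) : ℂ) := by
    have := integral_ofReal (𝕜 := ℂ) (f := G) (μ := (volume : Measure ℝ))
    simpa using this
  rw [h2, one_div, Complex.ofReal_inv]

lemma ft_diff_bound (G : ℝ → ℝ) (hG : Integrable G (volume : Measure ℝ))
    (hxG : Integrable (fun x => x * G x) (volume : Measure ℝ)) (p : ℝ) :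
    ‖fourierTransform G p - fourierTransform G 0‖
      ≤ (Real.sqrt (2 * Real.pi))⁻¹ * (|p| * ∫ x : ℝ, |x * G x|) := by
  unfold fourierTransform
  rw [← mul_sub, ← integral_sub (integrable_ker G hG p) (integrable_ker G hG 0)]
  rw [norm_mul]
  have h1 : ‖(1 / (Real.sqrt (2 * Real.pi) : ℂ))‖ = (Real.sqrt (2 * Real.pi))⁻¹ := by
    rw [norm_div, norm_one, Complex.norm_real, Real.norm_eq_abs,
      abs_of_nonneg (Real.sqrt_nonneg _), one_div]
  rw [h1]
  gcongr
  calc ‖∫ x : ℝ, ((G x : ℂ) * Complex.exp (-Complex.I * p * x) - (G x : ℂ) * Complex.exp (-Complex.I * (0:ℝ) * x))‖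
      ≤ ∫ x : ℝ, ‖(G x : ℂ) * Complex.exp (-Complex.I * p * x) - (G x : ℂ) * Complex.exp (-Complex.I * (0:ℝ) * x)‖ :=
        norm_integral_le_integral_norm _
    _ ≤ ∫ x : ℝ, |p| * |x * G x| := by
        apply integral_mono_of_nonneg
        · filter_upwards with x; positivity
        · exact (hxG.norm.const_mul |p|)
        · filter_upwards with x
          have : (G x : ℂ) * Complex.exp (-Complex.I * p * x) - (G x : ℂ) * Complex.exp (-Complex.I * (0:ℝ) * x)
              = (G x : ℂ) * (Complex.exp ((-(p*x) : ℝ) * Complex.I) - 1) := by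
            rw [exp_arg_eq]; push_cast; simp; ring_nf
          rw [this, norm_mul, Complex.norm_real, Real.norm_eq_abs]
          calc |G x| * ‖Complex.exp ((-(p*x):ℝ) * Complex.I) - 1‖
              ≤ |G x| * |(-(p*x))| := by
                gcongr; exact exp_I_sub_one_norm_le _
            _ = |p| * |x * G x| := by rw [abs_neg, abs_mul, abs_mul]; ring
    _ = |p| * ∫ x : ℝ, |x * G x| := by rw [integral_const_mul]

lemma ft_norm_le (G : ℝ → ℝ) (hG : Integrable G (volume : Measure ℝ)) (p : ℝ) :
    ‖fourierTransform G p‖ ≤ (Real.sqrt (2 * Real.pi))⁻¹ * ∫ x : ℝ, |G x| := by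
  unfold fourierTransform
  rw [norm_mul]
  have h1 : ‖(1 / (Real.sqrt (2 * Real.pi) : ℂ))‖ = (Real.sqrt (2 * Real.pi))⁻¹ := by
    rw [norm_div, norm_one, Complex.norm_real, Real.norm_eq_abs,
      abs_of_nonneg (Real.sqrt_nonneg _), one_div]
  rw [h1]
  gcongr
  calc ‖∫ x : ℝ, (G x : ℂ) * Complex.exp (-Complex.I * p * x)‖
      ≤ ∫ x : ℝ, ‖(G x : ℂ) * Complex.exp (-Complex.I * p * x)‖ := norm_integral_le_integral_norm _
    _ = ∫ x : ℝ, |G x| := by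
        congr 1; funext x
        rw [norm_mul, exp_arg_eq, Complex.norm_exp_ofReal_mul_I, mul_one, Complex.norm_real,
          Real.norm_eq_abs]

/-- Lemma A1 b): for `G, xG ∈ L¹(ℝ)` and `b ≠ 0`, `N_{0,b}` is finite (i.e. both
`Ĝ(p)/(p⁴ - ibp)` and `p⁴Ĝ(p)/(p⁴ - ibp)` are bounded) if and only if `∫ G = 0`. -/
theorem Nab_finite_zero_a_iff_orthogonality
    (G : ℝ → ℝ) (hG : Integrable G (volume : Measure ℝ))
    (hxG : Integrable (fun x => x * G x) (volume : Measure ℝ))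
    (b : ℝ) (hb : b ≠ 0) :
    ((∃ C : ℝ, ∀ p : ℝ, ‖fourierTransform G p / denom 0 b p‖ ≤ C) ∧
     (∃ C : ℝ, ∀ p : ℝ, ‖(p : ℂ) ^ 4 * fourierTransform G p / denom 0 b p‖ ≤ C)) ↔
    (∫ x : ℝ, G x) = 0 := by
  have hsqrt : (0:ℝ) < Real.sqrt (2 * Real.pi) := Real.sqrt_pos.mpr (by positivity)
  set c₁ : ℝ := (Real.sqrt (2 * Real.pi))⁻¹ * ∫ x : ℝ, |x * G x| with hc₁
  have hc₁0 : 0 ≤ c₁ := by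
    apply mul_nonneg (by positivity)
    exact integral_nonneg fun x => abs_nonneg _
  have hdiff : ∀ p : ℝ, ‖fourierTransform G p - fourierTransform G 0‖ ≤ c₁ * |p| := by
    intro p
    calc ‖fourierTransform G p - fourierTransform G 0‖
        ≤ (Real.sqrt (2 * Real.pi))⁻¹ * (|p| * ∫ x : ℝ, |x * G x|) := ft_diff_bound G hG hxG p
      _ = c₁ * |p| := by rw [hc₁]; ring
  constructor
  · rintro ⟨⟨C, hC⟩, -⟩
    have hC0 : 0 ≤ C := le_trans (norm_nonneg _) (hC 0)
    have key : ∀ p : ℝ, p ≠ 0 → ‖fourierTransform G 0‖ ≤ c₁ * |p| + C * (|p|^4 + |b| * |p|) := by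
      intro p hp
      have hd : 0 < ‖denom 0 b p‖ :=
        lt_of_lt_of_le (by positivity) (norm_denom_ge b p)
      have h2 : ‖fourierTransform G p‖ ≤ C * ‖denom 0 b p‖ := by
        have := hC p
        rw [norm_div] at this
        exact (div_le_iff₀ hd).mp this
      calc ‖fourierTransform G 0‖
          = ‖(fourierTransform G 0 - fourierTransform G p) + fourierTransform G p‖ := by ring_nf
        _ ≤ ‖fourierTransform G 0 - fourierTransform G p‖ + ‖fourierTransform G p‖ :=
            norm_add_le _ _
        _ ≤ c₁ * |p| + C * ‖denom 0 b p‖ := by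
            gcongr
            rw [norm_sub_rev]; exact hdiff p
        _ ≤ c₁ * |p| + C * (|p|^4 + |b| * |p|) := by
            gcongr
            exact norm_denom_le b p
    have hlim : Tendsto (fun p : ℝ => c₁ * |p| + C * (|p|^4 + |b| * |p|)) (𝓝[≠] (0:ℝ)) (𝓝 0) := by
      have hcont : Continuous fun p : ℝ => c₁ * |p| + C * (|p|^4 + |b| * |p|) := by continuity
      refine Tendsto.mono_left ?_ nhdsWithin_le_nhds
      simpa using hcont.tendsto 0
    have h0 : ‖fourierTransform G 0‖ ≤ 0 := by
      refine ge_of_tendsto hlim ?_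
      filter_upwards [self_mem_nhdsWithin] with p hp
      exact key p hp
    have hft0 : fourierTransform G 0 = 0 := norm_le_zero_iff.mp h0
    rw [ft_zero] at hft0
    rcases mul_eq_zero.mp hft0 with h | h
    · exfalso
      rw [Complex.ofReal_eq_zero] at h
      exact absurd h (ne_of_gt (inv_pos.mpr hsqrt))
    · exact_mod_cast h
  · intro h0
    have hft0 : fourierTransform G 0 = 0 := by
      rw [ft_zero, h0]; simp
    have hbound : ∀ p : ℝ, ‖fourierTransform G p‖ ≤ c₁ * |p| := by
      intro p
      have := hdiff p
      rwa [hft0, sub_zero] at this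
    constructor
    · refine ⟨c₁ / |b|, fun p => ?_⟩
      by_cases hp : p = 0
      · subst hp
        have : denom 0 b 0 = 0 := by simp [denom]
        rw [this, div_zero, norm_zero]
        positivity
      · have hd : 0 < ‖denom 0 b p‖ :=
          lt_of_lt_of_le (by positivity) (norm_denom_ge b p)
        rw [norm_div]
        calc ‖fourierTransform G p‖ / ‖denom 0 b p‖
            ≤ (c₁ * |p|) / (|b| * |p|) := by
              apply div_le_div₀ (by positivity) (hbound p) (by positivity) (norm_denom_ge b p)
          _ = c₁ / |b| := mul_div_mul_right _ _ (abs_ne_zero.mpr hp)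
    · refine ⟨(Real.sqrt (2 * Real.pi))⁻¹ * ∫ x : ℝ, |G x|, fun p => ?_⟩
      have hCG : 0 ≤ (Real.sqrt (2 * Real.pi))⁻¹ * ∫ x : ℝ, |G x| := by
        apply mul_nonneg (by positivity)
        exact integral_nonneg fun x => abs_nonneg _
      by_cases hp : p = 0
      · subst hp
        simpa using hCG
      · have hd : 0 < ‖denom 0 b p‖ :=
          lt_of_lt_of_le (by positivity) (norm_denom_ge b p)
        rw [norm_div, norm_mul, norm_pow, Complex.norm_real, Real.norm_eq_abs]
        calc |p|^4 * ‖fourierTransform G p‖ / ‖denom 0 b p‖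
            ≤ ‖denom 0 b p‖ * ‖fourierTransform G p‖ / ‖denom 0 b p‖ := by
              gcongr
              exact norm_denom_ge' b p
          _ = ‖fourierTransform G p‖ := mul_div_cancel_left₀ _ (ne_of_gt hd)
          _ ≤ _ := ft_norm_le G hG p
end
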